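/- Let q ≥ 3 be an integer, θ = 1 − 1/q, and define on [0,θ] the functions f₁(δ) = 2θ(1 − √(1 − δ/θ)), f₂(δ) = 1 − (1 − δ/θ)·(q−1)²/(q(q−2)), and f₃(δ) = 1 − ((q−1)/(q−2))·√(1 − δ/θ). Then for all δ ∈ [0,θ]: (i) f₁(δ) ≥ f₂(δ), with equality if and only if δ = (2q−3)/(q(q−1)); (ii) f₁′(δ) − f₂′(δ) = f₃(δ)/√(1 − δ/θ) for δ ∈ [0,θ), so the affine function f₂ is the tangent line to f₁ at δ = (2q−3)/(q(q−1)); and (iii) sign(f₁(δ) − 2/q) = sign(f₂(δ) − 2/q) = sign(δ − (2q−3)/(q(q−1))). -/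

import Mathlib

open Filter Real Set

/-- `f₁(δ) = 2θ(1 - √(1 - δ/θ))` with `θ = 1 - 1/q`. -/
noncomputable def fOne (q : ℕ) (δ : ℝ) : ℝ :=
  2 * (1 - 1 / (q : ℝ)) * (1 - Real.sqrt (1 - δ / (1 - 1 / (q : ℝ))))

/-- `f₂(δ) = 1 - (1 - δ/θ)(q-1)²/(q(q-2))` with `θ = 1 - 1/q`. -/
noncomputable def fTwo (q : ℕ) (δ : ℝ) : ℝ :=
  1 - (1 - δ / (1 - 1 / (q : ℝ))) * ((q : ℝ) - 1) ^ 2 / ((q : ℝ) * ((q : ℝ) - 2))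

/-- `f₃(δ) = 1 - ((q-1)/(q-2))√(1 - δ/θ)` with `θ = 1 - 1/q`. -/
noncomputable def fThree (q : ℕ) (δ : ℝ) : ℝ :=
  1 - (((q : ℝ) - 1) / ((q : ℝ) - 2)) * Real.sqrt (1 - δ / (1 - 1 / (q : ℝ)))

private lemma sign_mul_of_pos (c a : ℝ) (hc : 0 < c) :
    Real.sign (c * a) = Real.sign a := by
  rcases lt_trichotomy a 0 with h | h | h
  · rw [Real.sign_of_neg h, Real.sign_of_neg (mul_neg_of_pos_of_neg hc h)]
  · simp [h]
  · rw [Real.sign_of_pos h, Real.sign_of_pos (mul_pos hc h)]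

private lemma thetaPos (q : ℕ) (hq : 3 ≤ q) : (0:ℝ) < 1 - 1 / (q : ℝ) := by
  have hQ : (3:ℝ) ≤ (q:ℝ) := by exact_mod_cast hq
  have h1 : (1:ℝ)/(q:ℝ) ≤ 1/3 := by
    apply one_div_le_one_div_of_le <;> linarith
  linarith

private lemma uNonneg (q : ℕ) (hq : 3 ≤ q) (δ : ℝ) (hδ : δ ≤ 1 - 1 / (q : ℝ)) :
    0 ≤ 1 - δ / (1 - 1 / (q : ℝ)) := by
  have hθ := thetaPos q hq
  rw [sub_nonneg, div_le_one hθ]; exact hδ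

private lemma diffEq (q : ℕ) (hq : 3 ≤ q) (δ : ℝ) (hδ : δ ≤ 1 - 1 / (q : ℝ)) :
    fOne q δ - fTwo q δ =
      (((q:ℝ) - 1) * Real.sqrt (1 - δ / (1 - 1 / (q : ℝ))) - ((q:ℝ) - 2)) ^ 2
        / ((q:ℝ) * ((q:ℝ) - 2)) := by
  have hQ : (3:ℝ) ≤ (q:ℝ) := by exact_mod_cast hq
  have hθ := thetaPos q hq
  have hx2 : Real.sqrt (1 - δ / (1 - 1 / (q : ℝ))) ^ 2 = 1 - δ / (1 - 1 / (q : ℝ)) :=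
    Real.sq_sqrt (uNonneg q hq δ hδ)
  unfold fOne fTwo
  set x := Real.sqrt (1 - δ / (1 - 1 / (q : ℝ))) with hxdef
  rw [← hx2]
  have h0 : (q:ℝ) ≠ 0 := by linarith
  have h2 : (q:ℝ) - 2 ≠ 0 := by linarith
  field_simp
  ring

private lemma deltaEq (q : ℕ) (hq : 3 ≤ q) (δ : ℝ) (hδ : δ ≤ 1 - 1 / (q : ℝ)) :
    δ - (2 * (q : ℝ) - 3) / ((q : ℝ) * ((q : ℝ) - 1)) =
      ((1 - 1 / (q : ℝ)) * (((q:ℝ)-2)/((q:ℝ)-1) + Real.sqrt (1 - δ / (1 - 1 / (q : ℝ)))))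
        * (((q:ℝ)-2)/((q:ℝ)-1) - Real.sqrt (1 - δ / (1 - 1 / (q : ℝ)))) := by
  have hQ : (3:ℝ) ≤ (q:ℝ) := by exact_mod_cast hq
  have hθ := thetaPos q hq
  have hx2 : Real.sqrt (1 - δ / (1 - 1 / (q : ℝ))) ^ 2 = 1 - δ / (1 - 1 / (q : ℝ)) :=
    Real.sq_sqrt (uNonneg q hq δ hδ)
  set x := Real.sqrt (1 - δ / (1 - 1 / (q : ℝ))) with hxdef
  have h0 : (q:ℝ) ≠ 0 := by linarith
  have h1 : (q:ℝ) - 1 ≠ 0 := by linarith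
  have hδe : δ = (1 - 1 / (q : ℝ)) * (1 - x ^ 2) := by
    field_simp at hx2 ⊢; linarith
  rw [hδe]
  field_simp
  ring

private lemma fOneSign (q : ℕ) (hq : 3 ≤ q) (δ : ℝ) :
    fOne q δ - 2 / (q:ℝ) =
      (2 * ((q:ℝ) - 1) / (q:ℝ)) *
        (((q:ℝ)-2)/((q:ℝ)-1) - Real.sqrt (1 - δ / (1 - 1 / (q : ℝ)))) := by
  have hQ : (3:ℝ) ≤ (q:ℝ) := by exact_mod_cast hq
  have h0 : (q:ℝ) ≠ 0 := by linarith
  have h1 : (q:ℝ) - 1 ≠ 0 := by linarith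
  unfold fOne
  field_simp
  ring

private lemma fTwoSign (q : ℕ) (hq : 3 ≤ q) (δ : ℝ) :
    fTwo q δ - 2 / (q:ℝ) =
      (((q:ℝ)-1)^2 / ((q:ℝ) * ((q:ℝ)-2) * (1 - 1/(q:ℝ)))) *
        (δ - (2 * (q : ℝ) - 3) / ((q : ℝ) * ((q : ℝ) - 1))) := by
  have hQ : (3:ℝ) ≤ (q:ℝ) := by exact_mod_cast hq
  have hθ := thetaPos q hq
  have h0 : (q:ℝ) ≠ 0 := by linarith
  have h1 : (q:ℝ) - 1 ≠ 0 := by linarith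
  have h2 : (q:ℝ) - 2 ≠ 0 := by linarith
  unfold fTwo
  field_simp
  ring

private lemma innerDeriv (q : ℕ) (δ : ℝ) :
    HasDerivAt (fun t : ℝ => 1 - t / (1 - 1 / (q : ℝ))) (-(1 / (1 - 1 / (q : ℝ)))) δ := by
  simpa using ((hasDerivAt_id δ).div_const (1 - 1 / (q : ℝ))).const_sub 1

private lemma derivOne (q : ℕ) (hq : 3 ≤ q) (δ : ℝ)
    (hδ : δ ∈ Set.Ico (0:ℝ) (1 - 1 / (q : ℝ))) :
    deriv (fOne q) δ = 1 / Real.sqrt (1 - δ / (1 - 1 / (q : ℝ))) := by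
  have hQ : (3:ℝ) ≤ (q:ℝ) := by exact_mod_cast hq
  have hθ := thetaPos q hq
  have hu : 0 < 1 - δ / (1 - 1 / (q : ℝ)) := by
    rw [sub_pos, div_lt_one hθ]; exact hδ.2
  have hx : 0 < Real.sqrt (1 - δ / (1 - 1 / (q : ℝ))) := Real.sqrt_pos.2 hu
  have h2 : HasDerivAt (fun t : ℝ => Real.sqrt (1 - t / (1 - 1 / (q : ℝ))))
      (1 / (2 * Real.sqrt (1 - δ / (1 - 1 / (q : ℝ)))) * (-(1 / (1 - 1 / (q : ℝ))))) δ :=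
    (Real.hasDerivAt_sqrt hu.ne').comp δ (innerDeriv q δ)
  have h3 : HasDerivAt (fOne q)
      (2 * (1 - 1 / (q : ℝ)) *
        (-(1 / (2 * Real.sqrt (1 - δ / (1 - 1 / (q : ℝ)))) * (-(1 / (1 - 1 / (q : ℝ))))))) δ :=
    (h2.const_sub 1).const_mul _
  rw [h3.deriv]
  have h0 : (q:ℝ) ≠ 0 := by linarith
  have h1 : (q:ℝ) - 1 ≠ 0 := by linarith
  set x := Real.sqrt (1 - δ / (1 - 1 / (q : ℝ))) with hxdef
  field_simp [hx.ne']

private lemma derivTwo (q : ℕ) (hq : 3 ≤ q) (δ : ℝ) :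
    deriv (fTwo q) δ = ((q:ℝ) - 1) / ((q:ℝ) - 2) := by
  have hQ : (3:ℝ) ≤ (q:ℝ) := by exact_mod_cast hq
  have hθ := thetaPos q hq
  have h0 : (q:ℝ) ≠ 0 := by linarith
  have h1 : (q:ℝ) - 1 ≠ 0 := by linarith
  have h2 : (q:ℝ) - 2 ≠ 0 := by linarith
  have h3 : HasDerivAt (fTwo q)
      (-(-(1 / (1 - 1 / (q : ℝ))) * ((q:ℝ) - 1) ^ 2 / ((q:ℝ) * ((q:ℝ) - 2)))) δ :=
    (((innerDeriv q δ).mul_const (((q:ℝ) - 1) ^ 2)).div_const ((q:ℝ) * ((q:ℝ) - 2))).const_sub 1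
  rw [h3.deriv]
  have hθ' : 1 - 1/(q:ℝ) ≠ 0 := hθ.ne'
  field_simp

private lemma deltaStarMem (q : ℕ) (hq : 3 ≤ q) :
    (2 * (q : ℝ) - 3) / ((q : ℝ) * ((q : ℝ) - 1)) ∈ Set.Ico (0:ℝ) (1 - 1 / (q : ℝ)) := by
  have hQ : (3:ℝ) ≤ (q:ℝ) := by exact_mod_cast hq
  have h0 : (0:ℝ) < (q:ℝ) := by linarith
  have h1 : (0:ℝ) < (q:ℝ) - 1 := by linarith
  constructor
  · apply div_nonneg (by linarith) (by positivity)
  · have key : (1 - 1 / (q : ℝ)) - (2 * (q : ℝ) - 3) / ((q : ℝ) * ((q : ℝ) - 1)) =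
        ((q:ℝ) - 2) ^ 2 / ((q : ℝ) * ((q : ℝ) - 1)) := by
      field_simp
      ring
    have hp : (0:ℝ) < ((q:ℝ) - 2) ^ 2 / ((q : ℝ) * ((q : ℝ) - 1)) := by
      apply div_pos (by nlinarith) (by positivity)
    linarith

private lemma sqrtStar (q : ℕ) (hq : 3 ≤ q) :
    Real.sqrt (1 - (2 * (q : ℝ) - 3) / ((q : ℝ) * ((q : ℝ) - 1)) / (1 - 1 / (q : ℝ))) =
      ((q:ℝ) - 2) / ((q:ℝ) - 1) := by
  have hQ : (3:ℝ) ≤ (q:ℝ) := by exact_mod_cast hq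
  have hθ := thetaPos q hq
  have h0 : (q:ℝ) ≠ 0 := by intro h; rw [h] at hQ; linarith
  have h1 : (q:ℝ) - 1 ≠ 0 := by intro h; nlinarith [h]
  have key : 1 - (2 * (q : ℝ) - 3) / ((q : ℝ) * ((q : ℝ) - 1)) / (1 - 1 / (q : ℝ)) =
      (((q:ℝ) - 2) / ((q:ℝ) - 1)) ^ 2 := by
    field_simp
    ring
  rw [key, Real.sqrt_sq (div_nonneg (by linarith) (by linarith))]

theorem stmt13 (q : ℕ) (hq : 3 ≤ q) :
    (∀ δ ∈ Set.Icc (0 : ℝ) (1 - 1 / (q : ℝ)),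
      fTwo q δ ≤ fOne q δ ∧
      (fOne q δ = fTwo q δ ↔ δ = (2 * (q : ℝ) - 3) / ((q : ℝ) * ((q : ℝ) - 1)))) ∧
    (∀ δ ∈ Set.Ico (0 : ℝ) (1 - 1 / (q : ℝ)),
      deriv (fOne q) δ - deriv (fTwo q) δ =
        fThree q δ / Real.sqrt (1 - δ / (1 - 1 / (q : ℝ)))) ∧
    (fOne q ((2 * (q : ℝ) - 3) / ((q : ℝ) * ((q : ℝ) - 1))) =
      fTwo q ((2 * (q : ℝ) - 3) / ((q : ℝ) * ((q : ℝ) - 1))) ∧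
     deriv (fOne q) ((2 * (q : ℝ) - 3) / ((q : ℝ) * ((q : ℝ) - 1))) =
      deriv (fTwo q) ((2 * (q : ℝ) - 3) / ((q : ℝ) * ((q : ℝ) - 1)))) ∧
    (∀ δ ∈ Set.Icc (0 : ℝ) (1 - 1 / (q : ℝ)),
      Real.sign (fOne q δ - 2 / (q : ℝ)) =
        Real.sign (δ - (2 * (q : ℝ) - 3) / ((q : ℝ) * ((q : ℝ) - 1))) ∧
      Real.sign (fTwo q δ - 2 / (q : ℝ)) =
        Real.sign (δ - (2 * (q : ℝ) - 3) / ((q : ℝ) * ((q : ℝ) - 1)))) := by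
  have hQ : (3:ℝ) ≤ (q:ℝ) := by exact_mod_cast hq
  have hθ := thetaPos q hq
  have h0 : (0:ℝ) < (q:ℝ) := by linarith
  have h1 : (0:ℝ) < (q:ℝ) - 1 := by linarith
  have h2 : (0:ℝ) < (q:ℝ) - 2 := by linarith
  have hOneEqAtStar : fOne q ((2 * (q : ℝ) - 3) / ((q : ℝ) * ((q : ℝ) - 1))) =
      fTwo q ((2 * (q : ℝ) - 3) / ((q : ℝ) * ((q : ℝ) - 1))) := by
    have hd := diffEq q hq _ (le_of_lt (deltaStarMem q hq).2)
    rw [sqrtStar q hq] at hd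
    have hz : ((q:ℝ) - 1) * (((q:ℝ) - 2) / ((q:ℝ) - 1)) - ((q:ℝ) - 2) = 0 := by
      field_simp
      ring
    rw [hz] at hd
    simp at hd
    linarith
  refine ⟨?_, ?_, ⟨hOneEqAtStar, ?_⟩, ?_⟩
  · intro δ hδ
    have hd := diffEq q hq δ hδ.2
    have hdel := deltaEq q hq δ hδ.2
    set x := Real.sqrt (1 - δ / (1 - 1 / (q : ℝ))) with hxdef
    have hx0 : 0 ≤ x := Real.sqrt_nonneg _
    constructor
    · have hpos : 0 ≤ (((q:ℝ) - 1) * x - ((q:ℝ) - 2)) ^ 2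
          / ((q:ℝ) * ((q:ℝ) - 2)) := by positivity
      linarith
    · constructor
      · intro h
        rw [h, sub_self] at hd
        have hne : ((q:ℝ) * ((q:ℝ) - 2)) ≠ 0 := by positivity
        rw [eq_comm, div_eq_zero_iff] at hd
        have hsq : (((q:ℝ) - 1) * x - ((q:ℝ) - 2)) ^ 2 = 0 := hd.resolve_right hne
        have hz : ((q:ℝ) - 1) * x - ((q:ℝ) - 2) = 0 :=
          pow_eq_zero_iff two_ne_zero |>.mp hsq
        have hz2 : ((q:ℝ)-2)/((q:ℝ)-1) - x = 0 := by
          rw [sub_eq_zero, div_eq_iff (ne_of_gt h1)]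
          linarith
        rw [hz2, mul_zero] at hdel
        linarith
      · intro h
        rw [h]
        exact hOneEqAtStar
  · intro δ hδ
    have hu : 0 < 1 - δ / (1 - 1 / (q : ℝ)) := by
      rw [sub_pos, div_lt_one hθ]; exact hδ.2
    have hx : 0 < Real.sqrt (1 - δ / (1 - 1 / (q : ℝ))) := Real.sqrt_pos.2 hu
    rw [derivOne q hq δ hδ, derivTwo q hq δ]
    unfold fThree
    set x := Real.sqrt (1 - δ / (1 - 1 / (q : ℝ))) with hxdef
    have h2' : (q:ℝ) - 2 ≠ 0 := ne_of_gt h2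
    field_simp [hx.ne']
  · rw [derivOne q hq _ (deltaStarMem q hq), derivTwo q hq _, sqrtStar q hq, one_div_div]
  · intro δ hδ
    have hx0 : 0 ≤ Real.sqrt (1 - δ / (1 - 1 / (q : ℝ))) := Real.sqrt_nonneg _
    have p1 : (0:ℝ) < 2 * ((q:ℝ) - 1) / (q:ℝ) := by positivity
    have p2 : (0:ℝ) < (1 - 1 / (q : ℝ)) *
        (((q:ℝ)-2)/((q:ℝ)-1) + Real.sqrt (1 - δ / (1 - 1 / (q : ℝ)))) := by
      apply mul_pos hθ
      have : (0:ℝ) < ((q:ℝ)-2)/((q:ℝ)-1) := by positivity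
      linarith
    have p3 : (0:ℝ) < ((q:ℝ)-1)^2 / ((q:ℝ) * ((q:ℝ)-2) * (1 - 1/(q:ℝ))) := by positivity
    constructor
    · rw [fOneSign q hq δ, sign_mul_of_pos _ _ p1, deltaEq q hq δ hδ.2,
        sign_mul_of_pos _ _ p2]
    · rw [fTwoSign q hq δ, sign_mul_of_pos _ _ p3]
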